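/- Let A and B be unital complex C*-algebras, let τ_A be a tracial state on A, and let τ_B be a faithful tracial state on B. Suppose T : A → B is a ℂ-linear map such that ‖T x‖ ≤ ‖x‖ for all x ∈ A (T is contractive for the C*-norms) and τ_B((T x)* (T x)) = τ_A(x* x) for all x ∈ A (T is isometric for the 2-norms). Then for every unitary u ∈ A, the element T(u) is a unitary of B. -/

import Mathlib

open scoped ComplexOrder

/-- A linear map between unital complex C*-algebras with tracial states which is
contractive for the C*-norms and isometric for the 2-norms (with the target trace
faithful) sends unitaries to unitaries. -/
theorem contractive_two_norm_isometry_maps_unitaries_to_unitaries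
    {A B : Type*} [CStarAlgebra A] [CStarAlgebra B]
    (τA : A →ₗ[ℂ] ℂ)
    (hτA1 : τA 1 = 1)
    (hτApos : ∀ x : A, 0 ≤ τA (star x * x))
    (hτAtr : ∀ x y : A, τA (x * y) = τA (y * x))
    (τB : B →ₗ[ℂ] ℂ)
    (hτB1 : τB 1 = 1)
    (hτBpos : ∀ x : B, 0 ≤ τB (star x * x))
    (hτBtr : ∀ x y : B, τB (x * y) = τB (y * x))
    (hτBfaithful : ∀ x : B, τB (star x * x) = 0 → x = 0)
    (T : A →ₗ[ℂ] B)
    (hTcontr : ∀ x : A, ‖T x‖ ≤ ‖x‖)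
    (hTiso : ∀ x : A, τB (star (T x) * T x) = τA (star x * x))
    (u : A) (hu : star u * u = 1 ∧ u * star u = 1) :
    star (T u) * T u = 1 ∧ T u * star (T u) = 1 := by
  haveI : Nontrivial A := nontrivial_of_ne 1 0 fun h => by
    rw [h, map_zero] at hτA1; exact one_ne_zero hτA1.symm
  letI := CStarAlgebra.spectralOrder B
  haveI := CStarAlgebra.spectralOrderedRing (A := B)
  set v := T u with hv
  -- ‖u‖ = 1
  have hu1 : ‖u‖ ≤ 1 := by
    have h := CStarRing.norm_star_mul_self (x := u)
    rw [hu.1, norm_one] at h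
    nlinarith [norm_nonneg u]
  have hv1 : ‖v‖ ≤ 1 := (hTcontr u).trans hu1
  -- key: for x : B nonneg with τB x = 0, x = 0
  have key : ∀ x : B, 0 ≤ x → τB x = 0 → x = 0 := by
    intro x hx htx
    have hs : CFC.sqrt x * CFC.sqrt x = x := CFC.sqrt_mul_sqrt_self x hx
    have hsa : IsSelfAdjoint (CFC.sqrt x) := IsSelfAdjoint.of_nonneg (CFC.sqrt_nonneg x)
    have : CFC.sqrt x = 0 := by
      apply hτBfaithful
      rw [hsa.star_eq, hs, htx]
    rw [← hs, this, mul_zero]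
  -- generic step: if ‖w‖ ≤ 1 and τB (star w * w) = 1 then star w * w = 1
  have step : ∀ w : B, ‖w‖ ≤ 1 → τB (star w * w) = 1 → star w * w = 1 := by
    intro w hw hτw
    have hpos : (0 : B) ≤ star w * w := star_mul_self_nonneg w
    have hle : star w * w ≤ 1 := by
      rw [← CStarAlgebra.norm_le_one_iff_of_nonneg _ hpos,
        CStarRing.norm_star_mul_self]
      nlinarith [norm_nonneg w]
    have h0 : τB (1 - star w * w) = 0 := by
      rw [map_sub, hτB1, hτw, sub_self]
    have := key (1 - star w * w) (by rwa [sub_nonneg]) h0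
    rw [sub_eq_zero] at this
    exact this.symm
  have hvv : τB (star v * v) = 1 := by
    rw [hv, hTiso u, hu.1, hτA1]
  have h1 : star v * v = 1 := step v hv1 hvv
  refine ⟨h1, ?_⟩
  have hvs : ‖star v‖ ≤ 1 := by rwa [norm_star]
  have h2 : τB (star (star v) * star v) = 1 := by
    rw [star_star, hτBtr, h1, hτB1]
  have := step (star v) hvs h2
  rwa [star_star] at this
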